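/- For n ≥ 0, Σ_{F∈F(n)} Π_{v∈V(F)} (x + 1/h_v) = (1/((2n+1)·n!)) · Π_{i=0}^{n−1} ((2n+1−i)x + (2n+1−2i)), as polynomials in x. -/

import Mathlib

open Polynomial

inductive PlaneTree : Type where
  | node : List PlaneTree → PlaneTree

namespace PlaneTree

/-- total number of vertices -/
def numVertices : PlaneTree → ℕ
  | node ts => 1 + (ts.attach.map (fun t => numVertices t.1)).sum
decreasing_by simp only [PlaneTree.node.sizeOf_spec]; exact Nat.lt_add_left 1 (List.sizeOf_lt_of_mem t.2)

/-- number of internal vertices (vertices with at least one child) -/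
def numInternal : PlaneTree → ℕ
  | node ts => (if ts.isEmpty then 0 else 1) + (ts.attach.map (fun t => numInternal t.1)).sum
decreasing_by simp only [PlaneTree.node.sizeOf_spec]; exact Nat.lt_add_left 1 (List.sizeOf_lt_of_mem t.2)

/-- product of `g h_v` over all internal vertices `v`, where `h_v` is the number of
internal vertices of the subtree rooted at `v` -/
def internalHookProd {α : Type} [CommMonoid α] (g : ℕ → α) : PlaneTree → α
  | node ts =>
    (if ts.isEmpty then 1 else g (numInternal (node ts))) *
      (ts.attach.map (fun t => internalHookProd g t.1)).prod
decreasing_by simp only [PlaneTree.node.sizeOf_spec]; exact Nat.lt_add_left 1 (List.sizeOf_lt_of_mem t.2)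

/-- product of `g h_v` over all vertices `v`, where `h_v` is the number of
vertices of the subtree rooted at `v` -/
def vertexHookProd {α : Type} [CommMonoid α] (g : ℕ → α) : PlaneTree → α
  | node ts =>
    g (numVertices (node ts)) * (ts.attach.map (fun t => vertexHookProd g t.1)).prod
decreasing_by simp only [PlaneTree.node.sizeOf_spec]; exact Nat.lt_add_left 1 (List.sizeOf_lt_of_mem t.2)

/-- every internal vertex has exactly `a` children -/
def IsFullAry (a : ℕ) : PlaneTree → Prop
  | node ts => (ts.length = 0 ∨ ts.length = a) ∧ ∀ t ∈ ts, IsFullAry a t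

/-- `IsKMAry k m b T`: with the root of `T` viewed as being on a level of parity `b`
(`b = false` meaning even), every vertex on an even level has `k` children and
every vertex on an odd level has `m` or `0` children. -/
def IsKMAry (k m : ℕ) : Bool → PlaneTree → Prop
  | b, node ts =>
    (if b then ts.length = m ∨ ts.length = 0 else ts.length = k) ∧
      ∀ t ∈ ts, IsKMAry k m (!b) t

/-- number of vertices on levels of parity `b`, the root having parity `cur` -/
def parityVertices (b cur : Bool) : PlaneTree → ℕ
  | node ts =>
    (if cur = b then 1 else 0) + (ts.attach.map (fun t => parityVertices b (!cur) t.1)).sum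
termination_by T => sizeOf T
decreasing_by simp only [PlaneTree.node.sizeOf_spec]; exact Nat.lt_add_left 1 (List.sizeOf_lt_of_mem t.2)

/-- number of internal vertices on levels of parity `b`, the root having parity `cur` -/
def parityInternal (b cur : Bool) : PlaneTree → ℕ
  | node ts =>
    (if cur = b ∧ ¬ts.isEmpty then 1 else 0) +
      (ts.attach.map (fun t => parityInternal b (!cur) t.1)).sum
termination_by T => sizeOf T
decreasing_by simp only [PlaneTree.node.sizeOf_spec]; exact Nat.lt_add_left 1 (List.sizeOf_lt_of_mem t.2)

/-- the order of a `(k,m)`-ary tree: the number of internal (crucial) vertices on odd levels -/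
def kmOrder (T : PlaneTree) : ℕ := parityInternal true false T

end PlaneTree

section Rothe
variable {R : Type*} [CommRing R]

/-- Raney-type product `P * ∏_{i=1}^{k-1} (P + k·Z - i)` (and `1` for `k = 0`). -/
def rB (P Z : R) : ℕ → R
  | 0 => 1
  | (k+1) => P * ∏ i ∈ Finset.range k, (P + (k+1) • Z - (i+1 : ℕ))

@[simp] lemma rB_zero (P Z : R) : rB P Z 0 = 1 := rfl

lemma rB_succ (P Z : R) (k : ℕ) :
    rB P Z (k+1) = P * ∏ i ∈ Finset.range k, (P + (k+1) • Z - (i+1 : ℕ)) := rfl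

lemma rB_zero_left (Z : R) {k : ℕ} (hk : k ≠ 0) : rB 0 Z k = 0 := by
  cases k with
  | zero => exact absurd rfl hk
  | succ k => simp [rB_succ]

lemma rB_map {S : Type*} [CommRing S] (f : R →+* S) (P Z : R) (k : ℕ) :
    f (rB P Z k) = rB (f P) (f Z) k := by
  cases k with
  | zero => simp
  | succ k => simp [rB_succ, map_prod]

lemma rB_pascal (P Z : R) (k : ℕ) :
    rB (P + 1) Z (k + 1) = rB P Z (k + 1) + (k+1 : ℕ) * rB (P + Z) Z k := by
  cases k with
  | zero => simp [rB_succ]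
  | succ k =>
    have h1 : ∏ i ∈ Finset.range (k+1), (P + 1 + (k+2) • Z - (i+1 : ℕ))
        = (P + (k+2) • Z) * ∏ i ∈ Finset.range k, (P + (k+2) • Z - (i+1 : ℕ)) := by
      rw [Finset.prod_range_succ']
      have : ∀ i ∈ Finset.range k, (P + 1 + (k+2) • Z - ((i+1)+1 : ℕ))
          = (P + (k+2) • Z - (i+1 : ℕ)) := by
        intro i _; push_cast; try ring
      rw [Finset.prod_congr rfl this]
      have h0 : (P + 1 + (k+2) • Z - ((0:ℕ)+1 : ℕ)) = P + (k+2)•Z := by push_cast; ring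
      rw [h0, mul_comm]
    have h2 : ∏ i ∈ Finset.range (k+1), (P + (k+2) • Z - (i+1 : ℕ))
        = (∏ i ∈ Finset.range k, (P + (k+2) • Z - (i+1 : ℕ))) * (P + (k+2)•Z - (k+1 : ℕ)) := by
      rw [Finset.prod_range_succ]
    have h3 : ∏ i ∈ Finset.range k, (P + Z + (k+1) • Z - (i+1 : ℕ))
        = ∏ i ∈ Finset.range k, (P + (k+2) • Z - (i+1 : ℕ)) := by
      refine Finset.prod_congr rfl fun i _ => ?_
      simp only [succ_nsmul, add_smul]; ring_nf
    rw [rB_succ, rB_succ, rB_succ, h1, h2, h3]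
    set g := ∏ i ∈ Finset.range k, (P + (k+2) • Z - (i+1 : ℕ)) with hg
    push_cast
    ring
/-- Pascal recurrence valid for all `k`, with a vanishing coefficient at `k = 0`. -/
lemma rB_pascal' (P Z : R) (k : ℕ) :
    rB (P + 1) Z k = rB P Z k + (k : ℕ) * rB (P + Z) Z (k - 1) := by
  cases k with
  | zero => simp
  | succ k => simpa using rB_pascal P Z k

lemma rB_rothe_nat (m : ℕ) : ∀ (p z : ℕ) (Q : R),
    ∑ k ∈ Finset.range (m+1),
      (m.choose k : R) * (rB (p : R) (z : R) k * rB Q (z : R) (m - k))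
      = rB ((p : R) + Q) (z : R) m := by
  induction m using Nat.strong_induction_on with
  | _ m IHm =>
  intro p z Q
  induction p with
  | zero =>
    rw [Finset.sum_eq_single 0]
    · simp
    · intro k hk hk0
      rw [Nat.cast_zero, rB_zero_left _ hk0]
      ring
    · intro h; simp at h
  | succ p IHp =>
    have key : ∀ k ∈ Finset.range (m+1),
        (m.choose k : R) * (rB ((p:R)+1) (z : R) k * rB Q (z : R) (m - k))
          = (m.choose k : R) * (rB (p : R) (z : R) k * rB Q (z : R) (m - k))
            + (m.choose k : R) * (k : ℕ) * (rB ((p:R) + (z:R)) (z:R) (k-1) * rB Q (z:R) (m-k)) := by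
      intro k _
      rw [rB_pascal']
      ring
    push_cast
    rw [Finset.sum_congr rfl key, Finset.sum_add_distrib, IHp]
    rcases Nat.eq_zero_or_pos m with hm | hm
    · subst hm; simp
    obtain ⟨m', rfl⟩ : ∃ m', m = m' + 1 := ⟨m - 1, (Nat.succ_pred_eq_of_pos hm).symm⟩
    have h2 : ∑ k ∈ Finset.range (m'+1+1),
        ((m'+1).choose k : R) * (k : ℕ) * (rB ((p:R) + (z:R)) (z:R) (k-1) * rB Q (z:R) (m'+1-k))
        = (m'+1 : ℕ) * ∑ k ∈ Finset.range (m'+1),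
            ((m').choose k : R) * (rB ((p:R) + (z:R)) (z:R) k * rB Q (z:R) (m'-k)) := by
      rw [Finset.sum_range_succ']
      simp only [Nat.cast_zero, mul_zero, zero_mul, add_zero, Nat.add_sub_cancel_left,
        Nat.succ_sub_succ]
      rw [Finset.mul_sum]
      refine Finset.sum_congr rfl fun k hk => ?_
      have hch : ((m'+1).choose (k+1) * (k+1) : ℕ) = (m'+1) * m'.choose k :=
        (Nat.add_one_mul_choose_eq m' k).symm
      have hsub : m' + 1 - (k+1) = m' - k := by omega
      have hsub1 : (k+1) - 1 = k := rfl
      rw [hsub1] at *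
      calc (((m'+1).choose (k+1) : ℕ) : R) * ((k+1 : ℕ) : R)
            * (rB ((p:R) + (z:R)) (z:R) k * rB Q (z:R) (m'-k))
          = (((m'+1).choose (k+1) * (k+1) : ℕ) : R)
            * (rB ((p:R) + (z:R)) (z:R) k * rB Q (z:R) (m'-k)) := by push_cast; ring
        _ = (((m'+1) * m'.choose k : ℕ) : R)
            * (rB ((p:R) + (z:R)) (z:R) k * rB Q (z:R) (m'-k)) := by rw [hch]
        _ = ((m'+1 : ℕ) : R) * ((m'.choose k : R)
            * (rB ((p:R) + (z:R)) (z:R) k * rB Q (z:R) (m'-k))) := by push_cast; ring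
    rw [h2]
    have hz : (p : R) + (z : R) = ((p + z : ℕ) : R) := by push_cast; ring
    rw [hz, IHm m' (by omega) (p+z) z Q]
    have hpz : ((p+z : ℕ) : R) + Q = (p:R) + Q + (z:R) := by push_cast; ring
    rw [hpz]
    have target := rB_pascal ((p:R) + Q) (z:R) m'
    rw [show ((p:R) + 1 + Q) = ((p:R) + Q) + 1 by ring, target]
/-- The Rothe–Hagen convolution identity, for arbitrary parameters in a field
of characteristic zero. -/
lemma rB_rothe {K : Type*} [Field K] [CharZero K] (m : ℕ) (P Q Z : K) :
    ∑ k ∈ Finset.range (m+1), (m.choose k : K) * (rB P Z k * rB Q Z (m - k))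
      = rB (P + Q) Z m := by
  classical
  -- work in `K[s][t]` where `s` is the P-variable and `t` is the Z-variable
  set Pv : Polynomial (Polynomial K) := Polynomial.C Polynomial.X with hPv
  set Zv : Polynomial (Polynomial K) := Polynomial.X with hZv
  set CC : K →+* Polynomial (Polynomial K) :=
    (Polynomial.C : Polynomial K →+* Polynomial (Polynomial K)).comp Polynomial.C with hCC
  set g : Polynomial (Polynomial K) := (∑ k ∈ Finset.range (m+1),
      (m.choose k : Polynomial (Polynomial K)) * (rB Pv Zv k * rB (CC Q) Zv (m - k)))
      - rB (Pv + CC Q) Zv m with hg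
  -- a generic evaluation of `g`
  have hev : ∀ (v : Polynomial K) (w : K),
      ((Polynomial.evalRingHom w).comp (Polynomial.evalRingHom v)) g
        = (∑ k ∈ Finset.range (m+1),
            (m.choose k : K) * (rB w (Polynomial.eval w v) k *
              rB Q (Polynomial.eval w v) (m - k)))
          - rB (w + Q) (Polynomial.eval w v) m := by
    intro v w
    set ψ := (Polynomial.evalRingHom w).comp (Polynomial.evalRingHom v) with hψ
    have hP : ψ Pv = w := by simp [hψ, hPv]
    have hZ : ψ Zv = Polynomial.eval w v := by simp [hψ, hZv]
    have hQ : ψ (CC Q) = Q := by simp [hψ, hCC]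
    rw [hg, map_sub, map_sum]
    rw [rB_map ψ, map_add, hP, hZ, hQ]
    congr 1
    refine Finset.sum_congr rfl fun k hk => ?_
    rw [map_mul, map_mul, rB_map ψ, rB_map ψ, hP, hZ, hQ, map_natCast]
  -- `g` vanishes since it vanishes at all pairs of naturals
  have hg0 : g = 0 := by
    refine Polynomial.eq_zero_of_infinite_isRoot _ ?_
    have : ∀ z : ℕ, Polynomial.IsRoot g ((z : ℕ) : Polynomial K) := by
      intro z
      have : Polynomial.eval ((z : ℕ) : Polynomial K) g = 0 := by
        refine Polynomial.eq_zero_of_infinite_isRoot _ ?_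
        have : ∀ p : ℕ, Polynomial.IsRoot (Polynomial.eval ((z : ℕ) : Polynomial K) g)
            ((p : ℕ) : K) := by
          intro p
          have h := hev ((z : ℕ) : Polynomial K) ((p : ℕ) : K)
          simp only [Polynomial.eval_natCast] at h
          have h2 := rB_rothe_nat m p z Q
          simp only [g, Pv, Zv, CC] at h ⊢
          simp only [Polynomial.IsRoot, RingHom.comp_apply, Polynomial.coe_evalRingHom] at h ⊢
          rw [h, h2, sub_self]
        refine Set.infinite_of_injective_forall_mem
          (f := fun p : ℕ => ((p : ℕ) : K)) ?_ this
        exact fun a b hab => Nat.cast_injective hab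
      exact this
    refine Set.infinite_of_injective_forall_mem
      (f := fun z : ℕ => ((z : ℕ) : Polynomial K)) ?_ this
    exact fun a b hab => Nat.cast_injective hab
  -- now evaluate at `P`, `Z`
  have h := hev (Polynomial.C Z) P
  rw [hg0, map_zero, Polynomial.eval_C] at h
  exact sub_eq_zero.mp h.symm
end Rothe

noncomputable section Spec

/-- the right-hand side of the theorem -/
noncomputable def rhsPoly (n : ℕ) : ℚ[X] :=
  Polynomial.C (1 / (((2 * n + 1) * n.factorial : ℕ) : ℚ)) *
    ∏ i ∈ Finset.range n,
      (Polynomial.C ((2 * n + 1 - i : ℕ) : ℚ) * Polynomial.X +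
        Polynomial.C (((2 * n + 1 : ℕ) : ℚ) - 2 * i))

noncomputable def φ : ℚ[X] →+* RatFunc ℚ := algebraMap ℚ[X] (RatFunc ℚ)
noncomputable def xK : RatFunc ℚ := φ Polynomial.X
noncomputable def aK : RatFunc ℚ := (xK + 1) / (xK + 2)

instance : CharZero (RatFunc ℚ) :=
  charZero_of_injective_algebraMap ((algebraMap ℚ (RatFunc ℚ)).injective)

lemma hx2 : xK + 2 ≠ 0 := by
  have : xK + 2 = φ (Polynomial.X + Polynomial.C 2) := by
    simp [xK, φ]
  rw [this]
  exact RatFunc.algebraMap_ne_zero (Polynomial.X_add_C_ne_zero 2)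

lemma ha : aK * (xK + 2) = xK + 1 := div_mul_cancel₀ _ hx2

lemma phiC (q : ℚ) : φ (Polynomial.C q) = (q : RatFunc ℚ) := by
  simp only [φ, RatFunc.algebraMap_C, eq_ratCast]

lemma rB_a_succ (m : ℕ) : rB aK (2*aK) (m+1)
    = aK * ∏ i ∈ Finset.range m, (((2*m+3 : ℕ) : RatFunc ℚ) * aK - ((i+1 : ℕ) : RatFunc ℚ)) := by
  rw [rB_succ]
  congr 1
  refine Finset.prod_congr rfl fun i hi => ?_
  rw [nsmul_eq_mul]
  push_cast
  ring

lemma rhs_map (n : ℕ) : φ (rhsPoly n)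
    = (xK+2)^n * rB aK (2*aK) n / (n.factorial : RatFunc ℚ) := by
  cases n with
  | zero => simp [rhsPoly, phiC]
  | succ m =>
    rw [rhsPoly, map_mul, map_prod, phiC]
    have hfac : ∀ i ∈ Finset.range (m+1),
        φ (Polynomial.C ((2 * (m+1) + 1 - i : ℕ) : ℚ) * Polynomial.X +
            Polynomial.C (((2 * (m+1) + 1 : ℕ) : ℚ) - 2 * i))
          = (xK+2) * (((2*m+3 : ℕ) : RatFunc ℚ) * aK - (i : RatFunc ℚ)) := by
      intro i hi
      rw [map_add, map_mul, phiC, phiC]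
      have hle : i ≤ 2 * (m+1) + 1 := by have := Finset.mem_range.mp hi; omega
      have hcast : (((2 * (m+1) + 1 - i : ℕ) : ℚ) : RatFunc ℚ)
          = ((2*m+3 : ℕ) : RatFunc ℚ) - (i : RatFunc ℚ) := by
        rw [Nat.cast_sub hle]; push_cast; ring
      rw [hcast]
      have hXK : φ Polynomial.X = xK := rfl
      rw [hXK]
      push_cast
      simp only [aK]
      field_simp [hx2]
      ring
    rw [Finset.prod_congr rfl hfac, Finset.prod_mul_distrib, Finset.prod_const]
    rw [Finset.prod_range_succ']
    rw [rB_a_succ]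
    have h23 : ((2*m+3 : ℕ) : RatFunc ℚ) ≠ 0 := Nat.cast_ne_zero.mpr (by omega)
    have hfm : ((m+1).factorial : RatFunc ℚ) ≠ 0 :=
      Nat.cast_ne_zero.mpr (Nat.factorial_ne_zero _)
    have hc : (Rat.cast (1 / (((2 * (m+1) + 1) * (m+1).factorial : ℕ) : ℚ)) : RatFunc ℚ)
        = 1 / (((2*m+3 : ℕ) : RatFunc ℚ) * ((m+1).factorial : RatFunc ℚ)) := by
      push_cast
      ring_nf
    rw [hc]
    simp only [Nat.cast_zero, sub_zero, Finset.card_range]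
    have h23' : ((3:RatFunc ℚ) + (m : RatFunc ℚ)*2) ≠ 0 := by
      have : ((3:RatFunc ℚ) + (m : RatFunc ℚ)*2) = ((3 + m*2 : ℕ) : RatFunc ℚ) := by push_cast; ring
      rw [this]
      exact Nat.cast_ne_zero.mpr (by omega)
    have hfm' : (((1+m).factorial : ℕ) : RatFunc ℚ) ≠ 0 :=
      Nat.cast_ne_zero.mpr (Nat.factorial_ne_zero _)
    field_simp [h23, hfm, h23', hfm']

lemma rB_neg_a (j : ℕ) : rB (-aK) (2*aK) (j+1)
    = -(rB aK (2*aK) j * (((2*j+1 : ℕ) : RatFunc ℚ) * aK - (j : RatFunc ℚ))) := by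
  rw [rB_succ]
  have hcong : ∀ i ∈ Finset.range j, (-aK + (j+1) • (2*aK) - ((i+1 : ℕ) : RatFunc ℚ))
      = ((2*j+1 : ℕ) : RatFunc ℚ) * aK - ((i+1 : ℕ) : RatFunc ℚ) := by
    intro i _; rw [nsmul_eq_mul]; push_cast; ring
  rw [Finset.prod_congr rfl hcong]
  cases j with
  | zero => simp
  | succ j' =>
    rw [Finset.prod_range_succ, rB_succ]
    have hcong2 : ∀ i ∈ Finset.range j', (aK + (j'+1) • (2*aK) - ((i+1 : ℕ) : RatFunc ℚ))
        = ((2*(j'+1)+1 : ℕ) : RatFunc ℚ) * aK - ((i+1 : ℕ) : RatFunc ℚ) := by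
      intro i _; rw [nsmul_eq_mul]; push_cast; ring
    rw [Finset.prod_congr rfl hcong2]
    push_cast
    ring

lemma tree_map (j : ℕ) :
    φ ((Polynomial.X + Polynomial.C (1 / ((j+1 : ℕ) : ℚ))) * rhsPoly j)
      = -((xK+2)^(j+1) * rB (-aK) (2*aK) (j+1) / (((j+1).factorial : ℕ) : RatFunc ℚ)) := by
  rw [map_mul, map_add, phiC, rhs_map j, rB_neg_a j]
  have hXK : φ Polynomial.X = xK := rfl
  rw [hXK]
  have hkey : (xK+2) * (((2*j+1 : ℕ) : RatFunc ℚ) * aK - (j : RatFunc ℚ))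
      = ((j : RatFunc ℚ) + 1) * xK + 1 := by
    simp only [aK]
    field_simp [hx2]
    push_cast
    ring
  have hj1 : ((j : RatFunc ℚ) + 1) ≠ 0 := by
    have : ((j : RatFunc ℚ) + 1) = ((j+1 : ℕ) : RatFunc ℚ) := by push_cast; ring
    rw [this]; exact Nat.cast_ne_zero.mpr (by omega)
  have hjf : ((j.factorial : ℕ) : RatFunc ℚ) ≠ 0 :=
    Nat.cast_ne_zero.mpr (Nat.factorial_ne_zero _)
  have hfs : (((j+1).factorial : ℕ) : RatFunc ℚ)
      = ((j : RatFunc ℚ) + 1) * ((j.factorial : ℕ) : RatFunc ℚ) := by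
    rw [Nat.factorial_succ]; push_cast; ring
  rw [hfs]
  rw [show -((xK + 2) ^ (j + 1) * -(rB aK (2 * aK) j * (((2*j+1 : ℕ) : RatFunc ℚ) * aK - (j : RatFunc ℚ)))
        / (((j : RatFunc ℚ) + 1) * ((j.factorial : ℕ) : RatFunc ℚ)))
      = (xK + 2) ^ j * rB aK (2 * aK) j * ((xK+2) * (((2*j+1 : ℕ) : RatFunc ℚ) * aK - (j : RatFunc ℚ)))
        / (((j : RatFunc ℚ) + 1) * ((j.factorial : ℕ) : RatFunc ℚ)) by
    rw [pow_succ]; ring]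
  rw [hkey]
  push_cast
  field_simp

lemma rhs_rec (n : ℕ) :
    ∑ j ∈ Finset.range (n+1),
      (Polynomial.X + Polynomial.C (1 / ((j+1 : ℕ) : ℚ))) * rhsPoly j * rhsPoly (n-j)
      = rhsPoly (n+1) := by
  apply RatFunc.algebraMap_injective ℚ
  show φ _ = φ _
  rw [map_sum, rhs_map (n+1)]
  have hterm : ∀ j ∈ Finset.range (n+1),
      φ ((Polynomial.X + Polynomial.C (1 / ((j+1 : ℕ) : ℚ))) * rhsPoly j * rhsPoly (n-j))
      = -((xK+2)^(n+1) / (((n+1).factorial : ℕ) : RatFunc ℚ)) *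
          (((n+1).choose (j+1) : RatFunc ℚ) *
            (rB (-aK) (2*aK) (j+1) * rB aK (2*aK) (n-j))) := by
    intro j hj
    have hjn : j ≤ n := Nat.lt_succ_iff.mp (Finset.mem_range.mp hj)
    rw [map_mul, tree_map j, rhs_map (n-j)]
    have hch : (((n+1).choose (j+1) : ℕ) : RatFunc ℚ)
        = (((n+1).factorial : ℕ) : RatFunc ℚ) /
            ((((j+1).factorial : ℕ) : RatFunc ℚ) * (((n-j).factorial : ℕ) : RatFunc ℚ)) := by
      have h := Nat.cast_choose (RatFunc ℚ) (show j+1 ≤ n+1 by omega)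
      rw [h, Nat.succ_sub_succ]
    have hpow : (xK+2)^(j+1) * (xK+2)^(n-j) = (xK+2)^(n+1) := by
      rw [← pow_add]; congr 1; omega
    rw [hch]
    have h1 : (((j+1).factorial : ℕ) : RatFunc ℚ) ≠ 0 :=
      Nat.cast_ne_zero.mpr (Nat.factorial_ne_zero _)
    have h2 : (((n-j).factorial : ℕ) : RatFunc ℚ) ≠ 0 :=
      Nat.cast_ne_zero.mpr (Nat.factorial_ne_zero _)
    have h3 : (((n+1).factorial : ℕ) : RatFunc ℚ) ≠ 0 :=
      Nat.cast_ne_zero.mpr (Nat.factorial_ne_zero _)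
    field_simp
    rw [← hpow]
    ring
  rw [Finset.sum_congr rfl hterm, ← Finset.mul_sum]
  have hroth := rB_rothe (n+1) (-aK) aK (2*aK)
  rw [neg_add_cancel, rB_zero_left _ (Nat.succ_ne_zero n)] at hroth
  rw [Finset.sum_range_succ'] at hroth
  simp only [Nat.choose_zero_right, Nat.cast_one, one_mul, rB_zero, Nat.sub_zero,
    Nat.succ_sub_succ] at hroth
  have hsum : ∑ j ∈ Finset.range (n+1),
      (((n+1).choose (j+1) : RatFunc ℚ) *
        (rB (-aK) (2*aK) (j+1) * rB aK (2*aK) (n-j)))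
      = -rB aK (2*aK) (n+1) := by
    linear_combination hroth
  rw [hsum]
  ring

end Spec

noncomputable instance : DecidableEq PlaneTree := fun _ _ => Classical.propDecidable _

lemma numVertices_node (ts : List PlaneTree) :
    (PlaneTree.node ts).numVertices = 1 + (ts.map PlaneTree.numVertices).sum := by
  rw [PlaneTree.numVertices]
  congr 1
  rw [List.attach_map_val]

lemma vertexHookProd_node {α : Type} [CommMonoid α] (g : ℕ → α) (ts : List PlaneTree) :
    (PlaneTree.node ts).vertexHookProd g
      = g ((PlaneTree.node ts).numVertices) * (ts.map (PlaneTree.vertexHookProd g)).prod := by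
  rw [PlaneTree.vertexHookProd]
  congr 1
  rw [List.attach_map_val]

lemma numVertices_pos (t : PlaneTree) : 0 < t.numVertices := by
  cases t with
  | node ts => rw [numVertices_node]; omega

/-- all plane forests with `n` vertices -/
noncomputable def forestsOf : ℕ → Finset (List PlaneTree)
  | 0 => {[]}
  | (n+1) => (Finset.range (n+1)).attach.biUnion fun j =>
      ((forestsOf j.1) ×ˢ (forestsOf (n - j.1))).image fun p => PlaneTree.node p.1 :: p.2
decreasing_by
  all_goals first
    | exact Finset.mem_range.mp j.2
    | exact Nat.lt_succ_of_le (Nat.sub_le _ j.1)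

lemma mem_forestsOf : ∀ (n : ℕ) (F : List PlaneTree),
    F ∈ forestsOf n ↔ (F.map PlaneTree.numVertices).sum = n := by
  intro n
  induction n using Nat.strong_induction_on with
  | _ n IH =>
  intro F
  cases n with
  | zero =>
    rw [forestsOf]
    simp only [Finset.mem_singleton]
    constructor
    · rintro rfl; simp
    · intro h
      cases F with
      | nil => rfl
      | cons t F' =>
        exfalso
        simp only [List.map_cons, List.sum_cons] at h
        have := numVertices_pos t
        omega
  | succ n =>
    rw [forestsOf]
    simp only [Finset.mem_biUnion, Finset.mem_attach, Finset.mem_image, Finset.mem_product,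
      true_and, Subtype.exists]
    constructor
    · rintro ⟨j, hj, ⟨a, b⟩, ⟨ha, hb⟩, rfl⟩
      have hjn : j ≤ n := Nat.lt_succ_iff.mp (Finset.mem_range.mp hj)
      have ha' := (IH j (by omega) a).mp ha
      have hb' := (IH (n-j) (by omega) b).mp hb
      simp only [List.map_cons, List.sum_cons, numVertices_node, ha', hb']
      omega
    · intro h
      cases F with
      | nil => simp at h
      | cons t F' =>
        obtain ⟨ts⟩ := t
        simp only [List.map_cons, List.sum_cons, numVertices_node] at h
        set j := (ts.map PlaneTree.numVertices).sum with hj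
        have hjn : j ≤ n := by omega
        refine ⟨j, Finset.mem_range.mpr (by omega), ⟨ts, F'⟩, ⟨?_, ?_⟩, rfl⟩
        · exact (IH j (by omega) ts).mpr rfl
        · exact (IH (n-j) (by omega) F').mpr (by omega)

noncomputable def Spoly (n : ℕ) : ℚ[X] :=
  ∑ F ∈ forestsOf n,
    (F.map (PlaneTree.vertexHookProd (fun h => Polynomial.X + Polynomial.C (1 / (h : ℚ))))).prod

lemma Spoly_zero : Spoly 0 = 1 := by
  rw [Spoly, forestsOf]
  simp

lemma Spoly_succ (n : ℕ) : Spoly (n+1)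
    = ∑ j ∈ Finset.range (n+1),
        (Polynomial.X + Polynomial.C (1 / ((j+1 : ℕ) : ℚ))) * Spoly j * Spoly (n-j) := by
  set g : ℕ → ℚ[X] := fun h => Polynomial.X + Polynomial.C (1 / (h : ℚ)) with hg
  rw [Spoly, forestsOf]
  rw [Finset.sum_biUnion]
  · rw [← Finset.sum_attach (Finset.range (n+1))
      (fun j => (Polynomial.X + Polynomial.C (1 / ((j+1 : ℕ) : ℚ))) * Spoly j * Spoly (n-j))]
    refine Finset.sum_congr rfl fun j _ => ?_
    rw [Finset.sum_image]
    · rw [Finset.sum_product]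
      have hterm : ∀ a ∈ forestsOf j.1, ∀ b ∈ forestsOf (n - j.1),
          (((PlaneTree.node a :: b).map (PlaneTree.vertexHookProd g)).prod : ℚ[X])
            = g (j.1+1) * ((a.map (PlaneTree.vertexHookProd g)).prod
                * (b.map (PlaneTree.vertexHookProd g)).prod) := by
        intro a ha b hb
        rw [List.map_cons, List.prod_cons, vertexHookProd_node]
        have hva : (PlaneTree.node a).numVertices = j.1 + 1 := by
          rw [numVertices_node, (mem_forestsOf j.1 a).mp ha]
          omega
        rw [hva]
        ring
      rw [Finset.sum_congr rfl fun a ha =>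
        Finset.sum_congr rfl fun b hb => hterm a ha b hb]
      simp only [← Finset.mul_sum]
      rw [← Finset.sum_mul, ← Spoly, ← Spoly]
      rw [hg]
      ring
    · intro p _ q _ hpq
      simp only [List.cons.injEq, PlaneTree.node.injEq] at hpq
      exact Prod.ext hpq.1 hpq.2
  · intro s _ t _ hst
    simp only [Function.onFun]
    rw [Finset.disjoint_left]
    rintro F hFs hFt
    simp only [Finset.mem_image, Finset.mem_product] at hFs hFt
    obtain ⟨⟨a, b⟩, ⟨ha, _⟩, rfl⟩ := hFs
    obtain ⟨⟨a', b'⟩, ⟨ha', _⟩, heq⟩ := hFt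
    simp only [List.cons.injEq, PlaneTree.node.injEq] at heq
    apply hst
    have h1 := (mem_forestsOf s.1 a).mp ha
    have h2 := (mem_forestsOf t.1 a').mp ha'
    rw [heq.1] at h2
    exact Subtype.ext (h1 ▸ h2)

lemma finsum_eq_Spoly (n : ℕ) :
    (∑ᶠ F : {F : List PlaneTree // (F.map PlaneTree.numVertices).sum = n},
        (F.1.map (PlaneTree.vertexHookProd
          (fun h => Polynomial.X + Polynomial.C (1 / (h : ℚ))))).prod)
      = Spoly n := by
  rw [finsum_subtype_eq_finsum_cond
    (f := fun L : List PlaneTree =>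
      (L.map (PlaneTree.vertexHookProd (fun h => Polynomial.X + Polynomial.C (1 / (h : ℚ))))).prod)
    (fun F => (F.map PlaneTree.numVertices).sum = n)]
  have : ∀ i, (i ∈ {F : List PlaneTree | (F.map PlaneTree.numVertices).sum = n})
      ↔ i ∈ (forestsOf n : Set (List PlaneTree)) := by
    intro i
    show ((i.map PlaneTree.numVertices).sum = n) ↔ i ∈ forestsOf n
    exact (mem_forestsOf n i).symm
  rw [show (∑ᶠ (i : List PlaneTree) (_ : (i.map PlaneTree.numVertices).sum = n),
      ((i.map (PlaneTree.vertexHookProd (fun h => Polynomial.X + Polynomial.C (1 / (h : ℚ))))).prod))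
    = ∑ᶠ i ∈ (forestsOf n : Set (List PlaneTree)),
      ((i.map (PlaneTree.vertexHookProd (fun h => Polynomial.X + Polynomial.C (1 / (h : ℚ))))).prod) from
    finsum_mem_congr (by ext i; exact this i) fun _ _ => rfl]
  rw [finsum_mem_coe_finset]
  rfl

lemma Spoly_eq_rhsPoly (n : ℕ) : Spoly n = rhsPoly n := by
  induction n using Nat.strong_induction_on with
  | _ n IH =>
  cases n with
  | zero =>
    rw [Spoly_zero, rhsPoly]
    simp
  | succ n =>
    rw [Spoly_succ]
    rw [Finset.sum_congr rfl fun j hj => by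
      rw [IH j (by have := Finset.mem_range.mp hj; omega),
        IH (n-j) (by have := Finset.mem_range.mp hj; omega)]]
    exact rhs_rec n

/-- `Σ_{F∈F(n)} Π_{v∈V(F)} (x + 1/h_v) = (1/((2n+1)·n!)) · Π_{i=0}^{n-1} ((2n+1-i)x + (2n+1-2i))`,
summed over plane forests with `n` vertices. -/
theorem hook_poly_forests_shifted (n : ℕ) :
    (∑ᶠ F : {F : List PlaneTree // (F.map PlaneTree.numVertices).sum = n},
        (F.1.map (PlaneTree.vertexHookProd
          (fun h => Polynomial.X + Polynomial.C (1 / (h : ℚ))))).prod)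
      = Polynomial.C (1 / (((2 * n + 1) * n.factorial : ℕ) : ℚ)) *
        ∏ i ∈ Finset.range n,
          (Polynomial.C ((2 * n + 1 - i : ℕ) : ℚ) * Polynomial.X +
            Polynomial.C (((2 * n + 1 : ℕ) : ℚ) - 2 * i)) := by
  rw [finsum_eq_Spoly n, Spoly_eq_rhsPoly n, rhsPoly]
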